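/- Every quasi-factor of a minimal distal topological dynamical system (X, G), with X compact metric, is distal: if Z ⊆ 2^X is a minimal subsystem of the induced action of G on the hyperspace 2^X, then the system (Z, G) is distal. -/

import Mathlib

open TopologicalSpace Metric

/-- The image map on nonempty compacts induced by a continuous self-map of a compact
metric space is continuous for the Hausdorff metric. -/
lemma quasifactor_aux_map_continuous {X : Type*} [MetricSpace X] [CompactSpace X]
    (F : NonemptyCompacts X → NonemptyCompacts X) (f : X → X) (hf : Continuous f)
    (hF : ∀ A : NonemptyCompacts X, (F A : Set X) = f '' A) : Continuous F := by
  rw [Metric.continuous_iff]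
  intro A ε hε
  obtain ⟨δ, hδpos, hub⟩ := Metric.uniformContinuous_iff.mp
    (CompactSpace.uniformContinuous_of_continuous hf) (ε / 2) (by positivity)
  refine ⟨δ, hδpos, fun B hBA => ?_⟩
  rw [NonemptyCompacts.dist_eq] at hBA ⊢
  rw [hF, hF]
  have fin : EMetric.hausdorffEdist (B : Set X) (A : Set X) ≠ ⊤ :=
    hausdorffEdist_ne_top_of_nonempty_of_bounded B.nonempty A.nonempty
      B.isCompact.isBounded A.isCompact.isBounded
  have hle : hausdorffDist (f '' (B : Set X)) (f '' (A : Set X)) ≤ ε / 2 := by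
    apply hausdorffDist_le_of_mem_dist (by positivity)
    · rintro _ ⟨b, hb, rfl⟩
      obtain ⟨a, ha, hab⟩ := exists_dist_lt_of_hausdorffDist_lt hb hBA fin
      exact ⟨f a, Set.mem_image_of_mem f ha, (hub hab).le⟩
    · rintro _ ⟨a, ha, rfl⟩
      obtain ⟨b, hb, hba⟩ := exists_dist_lt_of_hausdorffDist_lt' ha hBA fin
      exact ⟨f b, Set.mem_image_of_mem f hb, by rw [dist_comm]; exact (hub hba).le⟩
  linarith

/-- The membership relation is closed in `X × NonemptyCompacts X`. -/
lemma quasifactor_aux_mem_closed {X : Type*} [MetricSpace X] [CompactSpace X] :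
    IsClosed {q : X × NonemptyCompacts X | q.1 ∈ (q.2 : Set X)} := by
  apply IsSeqClosed.isClosed
  rintro u ⟨x, S⟩ hu hlim
  have h1 : Filter.Tendsto (fun n => (u n).1) Filter.atTop (nhds x) :=
    (continuous_fst.tendsto _).comp hlim
  have h2 : Filter.Tendsto (fun n => (u n).2) Filter.atTop (nhds S) :=
    (continuous_snd.tendsto _).comp hlim
  have hbound : ∀ n, infDist x (S : Set X) ≤
      dist x (u n).1 + dist (u n).2 S := by
    intro n
    have fin : EMetric.hausdorffEdist ((u n).2 : Set X) (S : Set X) ≠ ⊤ :=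
      hausdorffEdist_ne_top_of_nonempty_of_bounded (u n).2.nonempty S.nonempty
        (u n).2.isCompact.isBounded S.isCompact.isBounded
    calc infDist x (S : Set X)
        ≤ infDist x ((u n).2 : Set X) + hausdorffDist ((u n).2 : Set X) (S : Set X) :=
          infDist_le_infDist_add_hausdorffDist fin
      _ ≤ dist x (u n).1 + dist (u n).2 S := by
          have hmem : (u n).1 ∈ ((u n).2 : Set X) := hu n
          have := infDist_le_dist_of_mem (x := x) hmem
          rw [NonemptyCompacts.dist_eq]
          linarith
  have htend : Filter.Tendsto (fun n => dist x (u n).1 + dist (u n).2 S)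
      Filter.atTop (nhds 0) := by
    have t1 : Filter.Tendsto (fun n => dist x (u n).1) Filter.atTop (nhds 0) := by
      have := Filter.Tendsto.dist
        (tendsto_const_nhds : Filter.Tendsto (fun _ : ℕ => x) Filter.atTop (nhds x)) h1
      simpa using this
    have t2 : Filter.Tendsto (fun n => dist (u n).2 S) Filter.atTop (nhds 0) := by
      have := Filter.Tendsto.dist h2
        (tendsto_const_nhds : Filter.Tendsto (fun _ : ℕ => S) Filter.atTop (nhds S))
      simpa using this
    simpa using t1.add t2
  have hle : infDist x (S : Set X) ≤ 0 := ge_of_tendsto' htend hbound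
  have : x ∈ (S : Set X) := by
    rw [(S.isCompact.isClosed).mem_iff_infDist_zero S.nonempty]
    exact le_antisymm hle infDist_nonneg
  exact this

/-- Ellis' idempotent lemma, for a compact set closed under a right-continuous
associative operation. -/
lemma quasifactor_aux_exists_idem {P : Type*} [TopologicalSpace P] [T2Space P]
    (comp : P → P → P) (hassoc : ∀ a b c : P, comp (comp a b) c = comp a (comp b c))
    (hcont : ∀ r : P, Continuous fun p => comp p r)
    (S : Set P) (hSc : IsCompact S) (hSne : S.Nonempty)
    (hmul : ∀ a ∈ S, ∀ b ∈ S, comp a b ∈ S) : ∃ v ∈ S, comp v v = v := by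
  letI : Semigroup S :=
    { mul := fun a b => ⟨comp a b, hmul _ a.2 _ b.2⟩
      mul_assoc := fun a b c => Subtype.ext (hassoc _ _ _) }
  haveI : CompactSpace S := isCompact_iff_compactSpace.mp hSc
  haveI : Nonempty S := hSne.to_subtype
  obtain ⟨⟨v, hv⟩, hidem⟩ := exists_idempotent_of_compact_t2_of_continuous_mul_left
    (M := S) (fun r => (((hcont r).comp continuous_subtype_val).subtype_mk _))
  exact ⟨v, hv, congrArg Subtype.val hidem⟩
/-- Every quasi-factor of a minimal distal topological dynamical system
`(X, G)`, with `X` compact metric, is distal.  The hyperspace `2^X` of nonempty closed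
(= compact) subsets of `X` with the Hausdorff metric carries the induced action
`g • A = {g • x : x ∈ A}`, encoded here by a map `σ` with `(σ g A : Set X) = (g • ·) '' A`;
a quasi-factor is a minimal subsystem `Z ⊆ 2^X`.  Conclusion: any two points of `Z` that
are proximal (the closure of their diagonal `G`-orbit in `2^X × 2^X` meets the diagonal)
are equal. -/
theorem quasifactor_of_distal_is_distal
    {G X : Type*} [Group G]
    [MetricSpace X] [CompactSpace X]
    [MulAction G X] [ContinuousConstSMul G X]
    (hmin : MulAction.IsMinimal G X)
    (hdistal : ∀ x₁ x₂ : X,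
      (∃ x : X, (x, x) ∈ closure (Set.range fun g : G => (g • x₁, g • x₂))) → x₁ = x₂)
    (σ : G → NonemptyCompacts X → NonemptyCompacts X)
    (hσ : ∀ (g : G) (A : NonemptyCompacts X), ((σ g A : Set X)) = (fun x : X => g • x) '' A)
    (Z : Set (NonemptyCompacts X)) (hZne : Z.Nonempty) (hZcl : IsClosed Z)
    (hZinv : ∀ (g : G), ∀ A ∈ Z, σ g A ∈ Z)
    (hZmin : ∀ A ∈ Z, Z ⊆ closure (Set.range fun g : G => σ g A)) :
    ∀ A ∈ Z, ∀ B ∈ Z,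
      (∃ C : NonemptyCompacts X,
        (C, C) ∈ closure (Set.range fun g : G => (σ g A, σ g B))) →
      A = B := by
  classical
  intro A hA B hB hprox
  obtain ⟨C, hC⟩ := hprox
  -- The ambient "enveloping" space
  let Φ : G → (X → X) × (NonemptyCompacts X → NonemptyCompacts X) :=
    fun g => (fun x => g • x, σ g)
  let E : Set ((X → X) × (NonemptyCompacts X → NonemptyCompacts X)) := closure (Set.range Φ)
  have hσcont : ∀ g : G, Continuous (σ g) := fun g =>
    quasifactor_aux_map_continuous (σ g) (fun x => g • x) (continuous_const_smul g) (hσ g)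
  -- composition
  let comp : (X → X) × (NonemptyCompacts X → NonemptyCompacts X) →
      (X → X) × (NonemptyCompacts X → NonemptyCompacts X) →
      (X → X) × (NonemptyCompacts X → NonemptyCompacts X) :=
    fun p q => (p.1 ∘ q.1, p.2 ∘ q.2)
  have hassoc : ∀ a b c, comp (comp a b) c = comp a (comp b c) := fun _ _ _ => rfl
  have hcontR : ∀ r, Continuous fun p => comp p r := by
    intro r
    refine Continuous.prodMk ?_ ?_
    · exact continuous_pi fun x => (continuous_apply (r.1 x)).comp continuous_fst
    · exact continuous_pi fun D => (continuous_apply (r.2 D)).comp continuous_snd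
  have hΦmul : ∀ g h : G, comp (Φ g) (Φ h) = Φ (g * h) := by
    intro g h
    have h1 : (fun x : X => g • x) ∘ (fun x : X => h • x) = fun x : X => (g * h) • x := by
      funext x; simp [mul_smul]
    have h2 : σ g ∘ σ h = σ (g * h) := by
      funext D
      apply NonemptyCompacts.ext
      show (σ g (σ h D) : Set X) = (σ (g * h) D : Set X)
      rw [hσ, hσ, hσ, ← Set.image_comp]
      congr 1
    show ((fun x : X => g • x) ∘ (fun x : X => h • x), σ g ∘ σ h) = (_, _)
    rw [h1, h2]
  have hEclosed : IsClosed E := isClosed_closure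
  have hEcompact : IsCompact E := hEclosed.isCompact
  have hcompE : ∀ p ∈ E, ∀ q ∈ E, comp p q ∈ E := by
    have hA1 : ∀ (g : G), ∀ q ∈ E, comp (Φ g) q ∈ E := by
      intro g q hq
      have hcont : Continuous fun r => comp (Φ g) r := by
        refine Continuous.prodMk ?_ ?_
        · exact continuous_pi fun x =>
            (continuous_const_smul g).comp ((continuous_apply x).comp continuous_fst)
        · exact continuous_pi fun D =>
            (hσcont g).comp ((continuous_apply D).comp continuous_snd)
      have hq' : q ∈ closure (Set.range Φ) := hq
      have : comp (Φ g) q ∈ closure (Set.range Φ) :=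
        map_mem_closure hcont hq'
          (by rintro r ⟨h, rfl⟩; exact ⟨g * h, (hΦmul g h).symm⟩)
      exact this
    intro p hp q hq
    have := map_mem_closure (hcontR q) hp (t := E) (by rintro r ⟨g, rfl⟩; exact hA1 g q hq)
    rwa [hEclosed.closure_eq] at this
  -- extract an element of E realizing the proximality witness
  have hα : ∃ p ∈ E, p.2 A = C ∧ p.2 B = C := by
    have he : Continuous fun p : (X → X) × (NonemptyCompacts X → NonemptyCompacts X) =>
        (p.2 A, p.2 B) :=
      Continuous.prodMk ((continuous_apply A).comp continuous_snd)
        ((continuous_apply B).comp continuous_snd)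
    have himg : IsClosed ((fun p : (X → X) × (NonemptyCompacts X → NonemptyCompacts X) =>
        (p.2 A, p.2 B)) '' E) := (hEcompact.image he).isClosed
    have hsub : closure (Set.range fun g : G => (σ g A, σ g B)) ⊆
        (fun p : (X → X) × (NonemptyCompacts X → NonemptyCompacts X) =>
          (p.2 A, p.2 B)) '' E := by
      apply closure_minimal _ himg
      rintro _ ⟨g, rfl⟩
      exact ⟨Φ g, subset_closure ⟨g, rfl⟩, rfl⟩
    obtain ⟨p, hp, hpe⟩ := hsub hC
    exact ⟨p, hp, congrArg Prod.fst hpe, congrArg Prod.snd hpe⟩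
  -- C belongs to Z
  have hCZ : C ∈ Z := by
    have h1 : C ∈ closure (Set.range fun g : G => σ g A) := by
      have := map_mem_closure (continuous_fst) hC
        (t := Set.range fun g : G => σ g A) (by rintro _ ⟨g, rfl⟩; exact ⟨g, rfl⟩)
      exact this
    exact closure_minimal (by rintro _ ⟨g, rfl⟩; exact hZinv g A hA) hZcl h1
  -- realize any element of Z as an image of C under E
  have hext : ∀ D ∈ Z, ∃ p ∈ E, p.2 C = D := by
    intro D hD
    have hDin : D ∈ closure (Set.range fun g : G => σ g C) := hZmin C hCZ hD
    have he : Continuous fun p : (X → X) × (NonemptyCompacts X → NonemptyCompacts X) =>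
        p.2 C := (continuous_apply C).comp continuous_snd
    have himg : IsClosed ((fun p : (X → X) × (NonemptyCompacts X → NonemptyCompacts X) =>
        p.2 C) '' E) := (hEcompact.image he).isClosed
    have hsub : closure (Set.range fun g : G => σ g C) ⊆
        (fun p : (X → X) × (NonemptyCompacts X → NonemptyCompacts X) => p.2 C) '' E :=
      closure_minimal (by rintro _ ⟨g, rfl⟩; exact ⟨Φ g, subset_closure ⟨g, rfl⟩, rfl⟩) himg
    exact hsub hDin
  -- the main step: if some element of E maps T to T and S to T, then S ⊆ T
  have main : ∀ S T : NonemptyCompacts X,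
      (∃ p ∈ E, p.2 T = T ∧ p.2 S = T) → (S : Set X) ⊆ (T : Set X) := by
    rintro S T ⟨p₀, hp₀E, hp₀T, hp₀S⟩
    set J : Set ((X → X) × (NonemptyCompacts X → NonemptyCompacts X)) :=
      E ∩ ({p | p.2 T = T} ∩ {p | p.2 S = T}) with hJdef
    have hJclosed : IsClosed J := by
      refine hEclosed.inter (IsClosed.inter ?_ ?_)
      · exact isClosed_eq ((continuous_apply T).comp continuous_snd) continuous_const
      · exact isClosed_eq ((continuous_apply S).comp continuous_snd) continuous_const
    have hJc : IsCompact J := hJclosed.isCompact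
    have hJne : J.Nonempty := ⟨p₀, hp₀E, hp₀T, hp₀S⟩
    have hJmul : ∀ a ∈ J, ∀ b ∈ J, comp a b ∈ J := by
      rintro a ⟨haE, haT, haS⟩ b ⟨hbE, hbT, hbS⟩
      refine ⟨hcompE a haE b hbE, ?_, ?_⟩
      · show a.2 (b.2 T) = T
        rw [hbT, haT]
      · show a.2 (b.2 S) = T
        rw [hbS, haT]
    obtain ⟨v, hvJ, hvidem⟩ := quasifactor_aux_exists_idem comp hassoc hcontR J hJc hJne hJmul
    obtain ⟨hvE, hvT, hvS⟩ := hvJ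
    -- first component of v is the identity, by distality
    have hv1 : ∀ x : X, v.1 x = x := by
      intro x
      have hidem1 : v.1 (v.1 x) = v.1 x := congrFun (congrArg Prod.fst hvidem) x
      have hm : Continuous fun p : (X → X) × (NonemptyCompacts X → NonemptyCompacts X) =>
          (p.1 x, p.1 (v.1 x)) :=
        Continuous.prodMk ((continuous_apply x).comp continuous_fst)
          ((continuous_apply (v.1 x)).comp continuous_fst)
      have hmem := map_mem_closure hm hvE
        (t := Set.range fun g : G => (g • x, g • (v.1 x)))
        (by rintro _ ⟨g, rfl⟩; exact ⟨g, rfl⟩)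
      rw [show (v.1 x, v.1 (v.1 x)) = (v.1 x, v.1 x) by rw [hidem1]] at hmem
      exact (hdistal x (v.1 x) ⟨v.1 x, hmem⟩).symm
    -- conclude S ⊆ T
    intro b hb
    have hm : Continuous fun p : (X → X) × (NonemptyCompacts X → NonemptyCompacts X) =>
        (p.1 b, p.2 S) :=
      Continuous.prodMk ((continuous_apply b).comp continuous_fst)
        ((continuous_apply S).comp continuous_snd)
    have hmem := map_mem_closure hm hvE
      (t := Set.range fun g : G => (g • b, σ g S))
      (by rintro _ ⟨g, rfl⟩; exact ⟨g, rfl⟩)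
    have hsubW : (Set.range fun g : G => (g • b, σ g S)) ⊆
        {q : X × NonemptyCompacts X | q.1 ∈ (q.2 : Set X)} := by
      rintro _ ⟨g, rfl⟩
      show g • b ∈ (σ g S : Set X)
      rw [hσ]
      exact ⟨b, hb, rfl⟩
    have hfin : (v.1 b, v.2 S) ∈ {q : X × NonemptyCompacts X | q.1 ∈ (q.2 : Set X)} :=
      closure_minimal hsubW quasifactor_aux_mem_closed hmem
    have : v.1 b ∈ (v.2 S : Set X) := hfin
    rwa [hv1 b, hvS] at this
  -- assemble
  obtain ⟨α, hαE, hαA, hαB⟩ := hα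
  obtain ⟨β, hβE, hβC⟩ := hext A hA
  obtain ⟨β', hβ'E, hβ'C⟩ := hext B hB
  have hγE : comp β α ∈ E := hcompE β hβE α hαE
  have hγ'E : comp β' α ∈ E := hcompE β' hβ'E α hαE
  have hγA : (comp β α).2 A = A := by show β.2 (α.2 A) = A; rw [hαA, hβC]
  have hγB : (comp β α).2 B = A := by show β.2 (α.2 B) = A; rw [hαB, hβC]
  have hγ'A : (comp β' α).2 A = B := by show β'.2 (α.2 A) = B; rw [hαA, hβ'C]
  have hγ'B : (comp β' α).2 B = B := by show β'.2 (α.2 B) = B; rw [hαB, hβ'C]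
  have h1 : (B : Set X) ⊆ (A : Set X) := main B A ⟨comp β α, hγE, hγA, hγB⟩
  have h2 : (A : Set X) ⊆ (B : Set X) := main A B ⟨comp β' α, hγ'E, hγ'B, hγ'A⟩
  exact NonemptyCompacts.ext (subset_antisymm h2 h1)
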